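/- For ρ > 0, the equation 1/2 + ρ log β + ρ(1-β) = 0 has a unique solution β_m ∈ (0,1), given by β_m = -W(-e^{-(1+1/(2ρ))}), where W is the principal branch of the Lambert W function. -/

import Mathlib

open Set

lemma logsub_strictMono : StrictMonoOn (fun x : ℝ => Real.log x - x) (Ioo (0:ℝ) 1) := by
  apply strictMonoOn_of_deriv_pos (convex_Ioo (0:ℝ) 1)
  · exact ContinuousOn.sub
      (Real.continuousOn_log.mono (fun x hx => ne_of_gt hx.1)) continuousOn_id
  · intro x hx
    rw [interior_Ioo] at hx
    have hd : deriv (fun x : ℝ => Real.log x - x) x = x⁻¹ - 1 := by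
      rw [deriv_fun_sub (Real.differentiableAt_log (ne_of_gt hx.1)) differentiableAt_fun_id,
        Real.deriv_log, deriv_id'']
    rw [hd]
    have : 1 < x⁻¹ := (one_lt_inv₀ hx.1).mpr hx.2
    linarith

/-- For ρ > 0, the equation 1/2 + ρ log β + ρ(1-β) = 0 has a unique solution
β_m in (0,1), given by β_m = -W(-e^{-(1+1/(2ρ))}) with W the principal Lambert
W branch (W(z)e^{W(z)} = z, W ≥ -1). -/
theorem beta_m_lambertW (ρ : ℝ) (hρ : 0 < ρ) (W : ℝ → ℝ)
    (hW : ∀ z, -Real.exp (-1) ≤ z → W z * Real.exp (W z) = z ∧ -1 ≤ W z) :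
    (∃! β : ℝ, β ∈ Set.Ioo (0:ℝ) 1 ∧ 1/2 + ρ * Real.log β + ρ * (1 - β) = 0) ∧
    (-W (-Real.exp (-(1 + 1/(2*ρ)))) ∈ Set.Ioo (0:ℝ) 1 ∧
      1/2 + ρ * Real.log (-W (-Real.exp (-(1 + 1/(2*ρ)))))
        + ρ * (1 - (-W (-Real.exp (-(1 + 1/(2*ρ)))))) = 0) := by
  have hρ' : ρ ≠ 0 := ne_of_gt hρ
  set c : ℝ := 1 + 1/(2*ρ) with hc
  clear_value c
  have hc1 : 1 < c := by
    have : 0 < 1/(2*ρ) := by positivity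
    rw [hc]; linarith
  have hexplt : Real.exp (-c) < Real.exp (-1) :=
    Real.exp_lt_exp.mpr (by linarith)
  have hzle : -Real.exp (-1) ≤ -Real.exp (-c) := by linarith
  obtain ⟨hWeq, hWge⟩ := hW _ hzle
  set w := W (-Real.exp (-c)) with hw
  have hwneg : w < 0 := by
    by_contra h
    push_neg at h
    have h1 : 0 ≤ w * Real.exp w := mul_nonneg h (Real.exp_pos w).le
    have h2 : (0:ℝ) < Real.exp (-c) := Real.exp_pos _
    rw [hWeq] at h1; linarith
  have hwne : w ≠ -1 := by
    intro h
    rw [h] at hWeq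
    have : -Real.exp (-1) = -Real.exp (-c) := by
      rw [← hWeq]; ring
    linarith
  have hwgt : -1 < w := lt_of_le_of_ne hWge (Ne.symm hwne)
  have hβ0 : 0 < -w := by linarith
  have hβ1 : -w < 1 := by linarith
  have hβmem : -w ∈ Ioo (0:ℝ) 1 := ⟨hβ0, hβ1⟩
  have hkey : (-w) * Real.exp (-(-w)) = Real.exp (-c) := by
    rw [neg_neg, neg_mul, hWeq, neg_neg]
  have hlog : Real.log (-w) - (-w) = -c := by
    have h1 : Real.log ((-w) * Real.exp (-(-w))) = Real.log (Real.exp (-c)) := by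
      rw [hkey]
    rw [Real.log_mul (ne_of_gt hβ0) (Real.exp_ne_zero _), Real.log_exp,
      Real.log_exp] at h1
    linarith
  have hρc : ρ * c = ρ + 1/2 := by
    rw [hc]; field_simp
  have hval : 1/2 + ρ * Real.log (-w) + ρ * (1 - (-w)) = 0 := by
    linear_combination ρ * hlog - hρc
  refine ⟨⟨-w, ⟨hβmem, hval⟩, ?_⟩, hβmem, hval⟩
  rintro y ⟨hymem, hyeq⟩
  have hy : Real.log y - y = -c := by
    have h2 : ρ * (Real.log y - y) = ρ * (-c) := by
      linear_combination hyeq + hρc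
    exact mul_left_cancel₀ hρ' h2
  exact logsub_strictMono.injOn hymem hβmem (by rw [hy, hlog])
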